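/- Let Ω ⊆ ℝ^N be nonempty open with finite measure and u ∈ L^1_loc(Ω). Suppose that for some fixed function v ∈ L^1_loc(Ω × Ω) and for every ψ ∈ C_c^1(Ω × Ω) one has ∫_Ω u(x) ∂*_{1,i}(ψ)(x) dx = −∫_{Ω×Ω} v(x,y) ψ(x,y) dx dy, where ∂*_{1,i}(ψ)(x) := ∫_Ω ∂/∂x_i [ψ(y,x) − ψ(x,y)] dy. Then for every θ ∈ C_c^1(Ω) with ∫_Ω θ ≠ 0, u has weak i-th partial derivative given a.e. by ∂_i u(x) = −(∫_Ω θ)^{−1} ∫_Ω [u(y) ∂_i θ(y) + v(x,y) θ(y)] dy. -/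

import Mathlib

open MeasureTheory Set Metric
open scoped ENNReal NNReal

lemma aux_int {X : Type*} [MeasurableSpace X] [TopologicalSpace X] [T2Space X]
    [OpensMeasurableSpace X] {μ : Measure X} {s : Set X} {f g : X → ℝ}
    (hf : LocallyIntegrableOn f s μ) (hg : Continuous g) (hgs : HasCompactSupport g)
    (hsub : tsupport g ⊆ s) :
    Integrable (fun x => f x * g x) (μ.restrict s) := by
  have h1 : IntegrableOn f (tsupport g) μ := hf.integrableOn_compact_subset hsub hgs
  have h2 : IntegrableOn (fun x => g x * f x) (tsupport g) μ :=
    h1.bdd_mul hg.aestronglyMeasurable (c := (hg.bounded_above_of_compact_support hgs).choose)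
      (Filter.Eventually.of_forall (hg.bounded_above_of_compact_support hgs).choose_spec)
  have h3 : Integrable (fun x => g x * f x) μ := by
    rw [← integrableOn_iff_integrable_of_support_subset
      ((Function.support_mul_subset_left g f).trans (subset_tsupport g))]
    exact h2
  exact (h3.restrict (s := s)).congr (by filter_upwards with x using mul_comm _ _)

set_option maxHeartbeats 1000000 in
/-- Let `Ω ⊆ ℝ^N` be nonempty open of finite measure, `u ∈ L^1_loc(Ω)`, and
`v ∈ L^1_loc(Ω × Ω)` a weak `i`-th nonlocal partial derivative of `u` for the constant
weight `1`, i.e. `∫_Ω u(x) ∂*_{1,i}(ψ)(x) dx = −∫_{Ω×Ω} v ψ` for all `ψ ∈ C_c^1(Ω × Ω)`,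
where `∂*_{1,i}(ψ)(x) = ∫_Ω ∂_{x_i}[ψ(y,x) − ψ(x,y)] dy`. Then for every `θ ∈ C_c^1(Ω)`
with `∫_Ω θ ≠ 0`, the function
`x ↦ −(∫_Ω θ)⁻¹ ∫_Ω [u(y) ∂_i θ(y) + v(x,y) θ(y)] dy` is a weak `i`-th partial derivative
of `u` on `Ω`. -/
theorem statement16 (N : ℕ) (Ω : Set (EuclideanSpace ℝ (Fin N)))
    (hΩ_open : IsOpen Ω) (hΩ_ne : Ω.Nonempty) (hΩ_fin : volume Ω < ⊤)
    (i : Fin N)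
    (u : EuclideanSpace ℝ (Fin N) → ℝ)
    (v : EuclideanSpace ℝ (Fin N) × EuclideanSpace ℝ (Fin N) → ℝ)
    (hu : LocallyIntegrableOn u Ω)
    (hv : LocallyIntegrableOn v (Ω ×ˢ Ω))
    (hweak : ∀ ψ : EuclideanSpace ℝ (Fin N) × EuclideanSpace ℝ (Fin N) → ℝ,
      ContDiff ℝ 1 ψ → HasCompactSupport ψ → tsupport ψ ⊆ Ω ×ˢ Ω →
      ∫ x in Ω, u x *
          (∫ y in Ω, fderiv ℝ (fun x' => ψ (y, x') - ψ (x', y)) x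
            (EuclideanSpace.single i (1:ℝ)))
        = - ∫ z, v z * ψ z ∂((volume.restrict Ω).prod (volume.restrict Ω))) :
    ∀ θ : EuclideanSpace ℝ (Fin N) → ℝ, ContDiff ℝ 1 θ → HasCompactSupport θ →
      tsupport θ ⊆ Ω → (∫ z in Ω, θ z) ≠ 0 →
      ∀ φ : EuclideanSpace ℝ (Fin N) → ℝ, ContDiff ℝ 1 φ → HasCompactSupport φ →
        tsupport φ ⊆ Ω →
        ∫ x in Ω, u x * fderiv ℝ φ x (EuclideanSpace.single i (1:ℝ))
          = - ∫ x in Ω,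
              (-(∫ z in Ω, θ z)⁻¹ *
                ∫ y in Ω,
                  (u y * fderiv ℝ θ y (EuclideanSpace.single i (1:ℝ)) + v (x, y) * θ y))
              * φ x := by
  intro θ hθ hθc hθs hθI φ hφ hφc hφs
  set e : EuclideanSpace ℝ (Fin N) := EuclideanSpace.single i (1:ℝ) with he
  set Dθ : EuclideanSpace ℝ (Fin N) → ℝ := fun x => fderiv ℝ θ x e with hDθ
  set Dφ : EuclideanSpace ℝ (Fin N) → ℝ := fun x => fderiv ℝ φ x e with hDφ
  set A : ℝ := ∫ z in Ω, φ z with hA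
  set B : ℝ := ∫ z in Ω, θ z with hB
  -- continuity / support of derivatives
  have hDθcont : Continuous Dθ :=
    (hθ.continuous_fderiv_apply one_ne_zero).comp (continuous_id.prodMk continuous_const)
  have hDφcont : Continuous Dφ :=
    (hφ.continuous_fderiv_apply one_ne_zero).comp (continuous_id.prodMk continuous_const)
  have hDθc : HasCompactSupport Dθ := by
    have := (hθc.fderiv ℝ).comp_left
      (g := fun L : EuclideanSpace ℝ (Fin N) →L[ℝ] ℝ => L e) rfl
    exact this
  have hDφc : HasCompactSupport Dφ := by
    have := (hφc.fderiv ℝ).comp_left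
      (g := fun L : EuclideanSpace ℝ (Fin N) →L[ℝ] ℝ => L e) rfl
    exact this
  have hDθs : tsupport Dθ ⊆ Ω := by
    refine (closure_minimal ?_ (isClosed_tsupport θ)).trans hθs
    intro x hx
    exact support_fderiv_subset ℝ (f := θ) (by
      intro hz
      simp only [Dθ, Function.mem_support] at hx
      exact hx (by simp [hz]))
  have hDφs : tsupport Dφ ⊆ Ω := by
    refine (closure_minimal ?_ (isClosed_tsupport φ)).trans hφs
    intro x hx
    exact support_fderiv_subset ℝ (f := φ) (by
      intro hz
      simp only [Dφ, Function.mem_support] at hx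
      exact hx (by simp [hz]))
  -- integrability facts
  have hφint : Integrable φ (volume.restrict Ω) :=
    (hφ.continuous.integrable_of_hasCompactSupport hφc).restrict
  have hθint : Integrable θ (volume.restrict Ω) :=
    (hθ.continuous.integrable_of_hasCompactSupport hθc).restrict
  have huDθ : Integrable (fun x => u x * Dθ x) (volume.restrict Ω) :=
    aux_int hu hDθcont hDθc hDθs
  have huDφ : Integrable (fun x => u x * Dφ x) (volume.restrict Ω) :=
    aux_int hu hDφcont hDφc hDφs
  set C : ℝ := ∫ y in Ω, u y * Dθ y with hC
  set D : ℝ := ∫ x in Ω, u x * Dφ x with hD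
  -- the test function ψ
  set ψ : EuclideanSpace ℝ (Fin N) × EuclideanSpace ℝ (Fin N) → ℝ :=
    fun p => φ p.1 * θ p.2 with hψdef
  have hψ : ContDiff ℝ 1 ψ := (hφ.comp contDiff_fst).mul (hθ.comp contDiff_snd)
  have hψsupp : tsupport ψ ⊆ tsupport φ ×ˢ tsupport θ := by
    refine closure_minimal ?_ ((isClosed_tsupport φ).prod (isClosed_tsupport θ))
    intro p hp
    simp only [Function.mem_support, hψdef, mul_ne_zero_iff] at hp
    exact ⟨subset_tsupport φ hp.1, subset_tsupport θ hp.2⟩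
  have hψc : HasCompactSupport ψ :=
    IsCompact.of_isClosed_subset (hφc.prod hθc) (isClosed_tsupport ψ) hψsupp
  have hψs : tsupport ψ ⊆ Ω ×ˢ Ω := hψsupp.trans (prod_mono hφs hθs)
  -- integrability of v·ψ on the product
  have hmeq : ((volume.restrict Ω).prod (volume.restrict Ω))
      = volume.restrict (Ω ×ˢ Ω) := by
    rw [Measure.prod_restrict, ← Measure.volume_eq_prod]
  have hF : Integrable (fun z => v z * ψ z)
      ((volume.restrict Ω).prod (volume.restrict Ω)) := by
    rw [hmeq]
    exact aux_int hv hψ.continuous hψc hψs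
  set P : ℝ := ∫ z, v z * ψ z ∂((volume.restrict Ω).prod (volume.restrict Ω)) with hP
  -- key identity from hweak
  have hder : ∀ x y : EuclideanSpace ℝ (Fin N),
      fderiv ℝ (fun x' => ψ (y, x') - ψ (x', y)) x e = φ y * Dθ x - θ y * Dφ x := by
    intro x y
    have h1 : (fun x' => ψ (y, x') - ψ (x', y))
        = fun x' => φ y * θ x' - φ x' * θ y := rfl
    rw [h1, fderiv_fun_sub ((hθ.differentiable one_ne_zero x).const_mul (φ y))
      ((hφ.differentiable one_ne_zero x).mul_const (θ y)),
      fderiv_const_mul (hθ.differentiable one_ne_zero x) (φ y),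
      fderiv_mul_const (hφ.differentiable one_ne_zero x) (θ y)]
    simp [Dθ, Dφ, mul_comm]
  have hL : (∫ x in Ω, u x * (∫ y in Ω, fderiv ℝ (fun x' => ψ (y, x') - ψ (x', y)) x e))
      = A * C - B * D := by
    have hstep : ∀ x : EuclideanSpace ℝ (Fin N),
        u x * (∫ y in Ω, fderiv ℝ (fun x' => ψ (y, x') - ψ (x', y)) x e)
          = A * (u x * Dθ x) - B * (u x * Dφ x) := by
      intro x
      have hinner : (∫ y in Ω, fderiv ℝ (fun x' => ψ (y, x') - ψ (x', y)) x e)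
          = A * Dθ x - B * Dφ x := by
        simp_rw [hder x]
        rw [integral_sub (hφint.mul_const _) (hθint.mul_const _),
          integral_mul_const, integral_mul_const, ← hA, ← hB]
      rw [hinner]; ring
    rw [integral_congr_ae (Filter.Eventually.of_forall hstep),
      integral_sub (huDθ.const_mul A) (huDφ.const_mul B),
      integral_const_mul, integral_const_mul, ← hC, ← hD]
  have hkey : A * C - B * D = -P := by
    rw [← hL]; exact hweak ψ hψ hψc hψs
  -- Fubini
  have hfub : P = ∫ x in Ω, ∫ y in Ω, v (x, y) * (φ x * θ y) := by
    rw [hP, integral_prod _ hF]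
  have hGint : Integrable (fun x => ∫ y in Ω, v (x, y) * (φ x * θ y))
      (volume.restrict Ω) := hF.integral_prod_left
  -- a.e. rewriting of the goal's inner integral
  have hae : ∀ᵐ x ∂(volume.restrict Ω),
      (∫ y in Ω, (u y * Dθ y + v (x, y) * θ y)) * φ x
        = C * φ x + ∫ y in Ω, v (x, y) * (φ x * θ y) := by
    filter_upwards [hF.prod_right_ae] with x hx
    by_cases hφx : φ x = 0
    · simp [hφx]
    · have hvint : Integrable (fun y => v (x, y) * θ y) (volume.restrict Ω) := by
        refine (hx.const_mul (φ x)⁻¹).congr ?_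
        filter_upwards with y
        show (φ x)⁻¹ * (v (x, y) * (φ x * θ y)) = v (x, y) * θ y
        field_simp
      rw [integral_add huDθ hvint, ← hC, add_mul]
      congr 1
      rw [← integral_mul_const]
      congr 1 with y
      ring
  -- finish
  have hRHS : (∫ x in Ω,
      (-(B)⁻¹ * ∫ y in Ω, (u y * Dθ y + v (x, y) * θ y)) * φ x)
        = -(B)⁻¹ * (C * A + P) := by
    have hrw : ∀ᵐ x ∂(volume.restrict Ω),
        (-(B)⁻¹ * ∫ y in Ω, (u y * Dθ y + v (x, y) * θ y)) * φ x
          = -(B)⁻¹ * (C * φ x + ∫ y in Ω, v (x, y) * (φ x * θ y)) := by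
      filter_upwards [hae] with x hx
      rw [mul_assoc, hx]
    rw [integral_congr_ae hrw, integral_const_mul,
      integral_add ((hφint.const_mul C)) hGint, integral_const_mul, ← hA, ← hfub]
  have h2 : B * D = C * A + P := by linarith
  have h3 : D = B⁻¹ * (C * A + P) := by
    rw [← h2, ← mul_assoc, inv_mul_cancel₀ hθI, one_mul]
  have hfinal : D = -(-(B)⁻¹ * (C * A + P)) := by rw [h3]; ring
  rw [← hRHS] at hfinal
  exact hfinal
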